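/- Let M > 1, n ≥ 1 a natural number, and v ≥ 0 with (n−1)·M·v ≤ (M−1)·n. Define t(α) = (M−1)Mnα² + (−M(1+M)v + n(2 + Mv + M²v))α − (1+M)n. Then t(0) = −(1+M)n < 0, t(1) = n(M−1)² + (n−1)(1+M)Mv > 0, and t(1/M) = ((M+1)/M)·((1−M)n + (n−1)Mv) ≤ 0; consequently the unique positive root of t lies in the interval [1/M, 1). -/

import Mathlib

/-- The auxiliary quadratic `t(α)` from the two-step stochastic stepsize
schedule analysis. -/
noncomputable def tquad (M n v α : ℝ) : ℝ :=
  (M - 1) * M * n * α ^ 2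
    + (-(M * (1 + M) * v) + n * (2 + M * v + M ^ 2 * v)) * α
    - (1 + M) * n

lemma quad_pos_root_unique (a b c α β : ℝ) (ha : 0 < a) (hc : c < 0)
    (hα : 0 < α) (hβ : 0 < β)
    (h1 : a * α ^ 2 + b * α + c = 0) (h2 : a * β ^ 2 + b * β + c = 0) :
    α = β := by
  by_contra h
  have h3 : (α - β) * (a * (α + β) + b) = 0 := by linear_combination h1 - h2
  have h4 : a * (α + β) + b = 0 :=
    (mul_eq_zero.mp h3).resolve_left (sub_ne_zero.mpr h)
  have h5 : c = a * α * β := by linear_combination h1 - α * h4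
  nlinarith [mul_pos (mul_pos ha hα) hβ]

theorem stmt_11 (M : ℝ) (n : ℕ) (v : ℝ)
    (hM : 1 < M) (hn : 1 ≤ n) (hv : 0 ≤ v)
    (hbound : ((n : ℝ) - 1) * M * v ≤ (M - 1) * n) :
    (tquad M (n : ℝ) v 0 = -((1 + M) * (n : ℝ)) ∧ tquad M (n : ℝ) v 0 < 0) ∧
    (tquad M (n : ℝ) v 1
        = (n : ℝ) * (M - 1) ^ 2 + ((n : ℝ) - 1) * (1 + M) * M * v ∧
      0 < tquad M (n : ℝ) v 1) ∧
    (tquad M (n : ℝ) v (1 / M)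
        = (M + 1) / M * ((1 - M) * (n : ℝ) + ((n : ℝ) - 1) * M * v) ∧
      tquad M (n : ℝ) v (1 / M) ≤ 0) ∧
    (∃! α : ℝ, 0 < α ∧ tquad M (n : ℝ) v α = 0) ∧
    (∀ α : ℝ, 0 < α → tquad M (n : ℝ) v α = 0 → α ∈ Set.Ico (1 / M) 1) := by
  have hM0 : (0 : ℝ) < M := by linarith
  have hn1 : (1 : ℝ) ≤ (n : ℝ) := by exact_mod_cast hn
  have ha : 0 < (M - 1) * M * n :=
    mul_pos (mul_pos (by linarith) hM0) (by linarith)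
  have hc : -((1 + M) * (n : ℝ)) < 0 := by nlinarith
  have ht0 : tquad M (n : ℝ) v 0 = -((1 + M) * (n : ℝ)) := by
    simp [tquad]
  have ht1 : tquad M (n : ℝ) v 1
      = (n : ℝ) * (M - 1) ^ 2 + ((n : ℝ) - 1) * (1 + M) * M * v := by
    simp [tquad]; ring
  have ht1pos : 0 < tquad M (n : ℝ) v 1 := by
    rw [ht1]
    have h1 : 0 < (n : ℝ) * (M - 1) ^ 2 := by nlinarith
    have h2 : 0 ≤ ((n : ℝ) - 1) * (1 + M) * M * v := by
      have : (0:ℝ) ≤ (n : ℝ) - 1 := by linarith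
      positivity
    linarith
  have htM : tquad M (n : ℝ) v (1 / M)
      = (M + 1) / M * ((1 - M) * (n : ℝ) + ((n : ℝ) - 1) * M * v) := by
    have hMne : M ≠ 0 := ne_of_gt hM0
    unfold tquad
    field_simp
    ring
  have htMle : tquad M (n : ℝ) v (1 / M) ≤ 0 := by
    rw [htM]
    have h1 : (1 - M) * (n : ℝ) + ((n : ℝ) - 1) * M * v ≤ 0 := by linarith
    have h2 : 0 < (M + 1) / M := by positivity
    nlinarith
  -- existence of a root in Ico (1/M) 1
  have hcont : ContinuousOn (fun α => tquad M (n : ℝ) v α) (Set.Icc (1 / M) 1) := by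
    apply Continuous.continuousOn
    unfold tquad
    continuity
  have hle : 1 / M ≤ 1 := by
    rw [div_le_one hM0]; linarith
  have hIVT := intermediate_value_Ico hle hcont
  have h0mem : (0 : ℝ) ∈ Set.Ico (tquad M (n : ℝ) v (1 / M)) (tquad M (n : ℝ) v 1) :=
    ⟨htMle, ht1pos⟩
  obtain ⟨α, hαmem, hαroot⟩ := hIVT h0mem
  have hαpos : 0 < α := lt_of_lt_of_le (by positivity) hαmem.1
  have huniq : ∀ β : ℝ, 0 < β → tquad M (n : ℝ) v β = 0 → β = α := by
    intro β hβ hβr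
    apply quad_pos_root_unique ((M - 1) * M * n)
      (-(M * (1 + M) * v) + n * (2 + M * v + M ^ 2 * v)) (-((1 + M) * (n : ℝ)))
      β α ha hc hβ hαpos
    · rw [← hβr]; simp [tquad]; ring
    · rw [← hαroot]; simp [tquad]; ring
  refine ⟨⟨ht0, ht0 ▸ hc⟩, ⟨ht1, ht1pos⟩, ⟨htM, htMle⟩,
    ⟨α, ⟨hαpos, hαroot⟩, fun β hβ => huniq β hβ.1 hβ.2⟩, ?_⟩
  intro β hβ hβr
  rw [huniq β hβ hβr]
  exact hαmem
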